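/- Let g = gl_N with nilpotent f of partition type p_1^{r_1}⋯p_s^{r_s} (p_1 > ⋯ > p_s), F the corresponding nilpotent endomorphism of V = F^N acting as left shift in the pyramid basis, F^t the right shift, V_± as above, and r = ∑ r_i. Define U^⊥ = 1_{F^t V}·End(V) ⊕ 1_{V_−}·(End V)[>0], where (End V)[>0] is the positively graded part with respect to the right-aligned good grading. Then dim(U^⊥) = N(N−r) + ∑_{i<j} r_i r_j (p_i − p_j), and U^⊥ is a complement to the centralizer g^f in g, i.e. g = g^f ⊕ U^⊥. -/

import Mathlib

/-- A "box" of the pyramid attached to the partition `p₁^{r₁} ⋯ p_s^{r_s}`. The last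
coordinate is the position of the box in its row, counted from the right
(`0` = rightmost box); so in the right-aligned pyramid the `x`-coordinate of a box is
the negative of its last coordinate, and a box is leftmost iff its position `+ 1` equals
the length of its row. -/
abbrev PyramidBox {s : ℕ} (p r : Fin s → ℕ) : Type := (i : Fin s) × (Fin (r i) × Fin (p i))

/-- The elementary endomorphism `E_{x,y}` sending the basis vector `b y` to `b x` and all
other basis vectors to `0`. -/
noncomputable def elemEnd {K : Type*} [Field K] {V : Type*} [AddCommGroup V] [Module K V]
    {ι : Type*} (b : Module.Basis ι K V) (x y : ι) : Module.End K V :=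
  (b.coord y).smulRight (b x)

/-- The subspace `U^⊥ = 1_{FᵗV}·End(V) ⊕ 1_{V₋}·(End V)[>0]` of `gl(V)` for the
right-aligned pyramid: it is spanned by the elementary matrices `E_{x,y}` such that either
`x` is not a leftmost box (these span `1_{FᵗV} End V`), or `x` is a leftmost box and the
arrow from `y` to `x` has strictly positive degree, i.e. `y` is strictly to the left of `x`
(these span `1_{V₋}(End V)[>0]`). -/
noncomputable def Uperp {K : Type*} [Field K] {V : Type*} [AddCommGroup V] [Module K V]
    {s : ℕ} (p r : Fin s → ℕ) (b : Module.Basis (PyramidBox p r) K V) :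
    Submodule K (Module.End K V) :=
  Submodule.span K
    {X : Module.End K V | ∃ x y : PyramidBox p r,
      X = elemEnd b x y ∧
        (((x.2.2 : ℕ) + 1 < p x.1) ∨
          ((x.2.2 : ℕ) + 1 = p x.1 ∧ (x.2.2 : ℕ) < (y.2.2 : ℕ)))}


section aux
variable {K : Type*} [Field K] {V : Type*} [AddCommGroup V] [Module K V]
  {s : ℕ} {p r : Fin s → ℕ} (b : Module.Basis (PyramidBox p r) K V)

noncomputable def endEquiv :
    Module.End K V ≃ₗ[K] (PyramidBox p r × PyramidBox p r → K) :=
  (LinearMap.toMatrix b b).trans (LinearEquiv.curry K K (PyramidBox p r) (PyramidBox p r)).symm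

lemma endEquiv_apply (A : Module.End K V) (z : PyramidBox p r × PyramidBox p r) :
    endEquiv b A z = b.repr (A (b z.2)) z.1 := by
  obtain ⟨z1, z2⟩ := z
  change (LinearMap.toMatrix b b A) z1 z2 = _
  rw [LinearMap.toMatrix_apply]

noncomputable def basisEnd :
    Module.Basis (PyramidBox p r × PyramidBox p r) K (Module.End K V) :=
  Module.Basis.ofEquivFun (endEquiv b)

lemma basisEnd_repr (A : Module.End K V) (z : PyramidBox p r × PyramidBox p r) :
    (basisEnd b).repr A z = b.repr (A (b z.2)) z.1 := by
  rw [basisEnd, Module.Basis.ofEquivFun_repr_apply, endEquiv_apply]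

lemma repr_elemEnd (u w z v : PyramidBox p r) :
    b.repr (elemEnd b u w (b z)) v = if z = w ∧ u = v then 1 else 0 := by
  classical
  simp only [elemEnd, LinearMap.smulRight_apply, Module.Basis.coord_apply, map_smul, b.repr_self,
    Finsupp.smul_apply, Finsupp.single_apply, smul_eq_mul]
  split_ifs <;> simp_all

lemma basisEnd_apply (z : PyramidBox p r × PyramidBox p r) :
    basisEnd b z = elemEnd b z.1 z.2 := by
  classical
  apply (basisEnd b).repr.injective
  ext w
  rw [(basisEnd b).repr_self, basisEnd_repr, repr_elemEnd, Finsupp.single_apply]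
  obtain ⟨z1, z2⟩ := z; obtain ⟨w1, w2⟩ := w
  simp [Prod.ext_iff, and_comm, eq_comm]

end aux

section aux
variable {K : Type*} [Field K] {V : Type*} [AddCommGroup V] [Module K V]
  {s : ℕ} {p r : Fin s → ℕ}

lemma box_eq_iff {i j : Fin s} {a : Fin (r i)} {c : Fin (r j)} {ka : Fin (p i)} {kc : Fin (p j)} :
    (⟨i, a, ka⟩ : PyramidBox p r) = ⟨j, c, kc⟩
      ↔ ∃ h : i = j, c = h ▸ a ∧ (ka : ℕ) = (kc : ℕ) := by
  constructor
  · intro h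
    injection h with h1 h2
    subst h1
    obtain ⟨h3, h4⟩ := Prod.mk.injEq _ _ _ _ ▸ eq_of_heq h2
    exact ⟨rfl, h3.symm, by rw [h4]⟩
  · rintro ⟨rfl, rfl, h3⟩
    exact congrArg _ (Prod.ext rfl (Fin.ext h3))

variable (b : Module.Basis (PyramidBox p r) K V) (F : Module.End K V)

lemma repr_F_zero
    (hF : ∀ x : PyramidBox p r, F (b x) = if h : (x.2.2 : ℕ) + 1 < p x.1
        then b ⟨x.1, x.2.1, ⟨(x.2.2 : ℕ) + 1, h⟩⟩ else 0)
    (i : Fin s) (a : Fin (r i)) (h : 0 < p i) (v : V) :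
    b.repr (F v) ⟨i, a, ⟨0, h⟩⟩ = 0 := by
  have key : (b.coord ⟨i, a, ⟨0, h⟩⟩) ∘ₗ F = 0 := by
    apply b.ext
    rintro ⟨j, c, ⟨l, hl⟩⟩
    simp only [LinearMap.comp_apply, hF, LinearMap.zero_apply]
    split_ifs with hc
    · rw [Module.Basis.coord_apply, b.repr_self, Finsupp.single_apply, if_neg]
      intro hcon
      obtain ⟨rfl, -, hval⟩ := box_eq_iff.mp hcon
      simp at hval
    · simp
  have := congrArg (fun (G : V →ₗ[K] K) => G v) key
  simpa using this

lemma repr_F_succ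
    (hF : ∀ x : PyramidBox p r, F (b x) = if h : (x.2.2 : ℕ) + 1 < p x.1
        then b ⟨x.1, x.2.1, ⟨(x.2.2 : ℕ) + 1, h⟩⟩ else 0)
    (i : Fin s) (a : Fin (r i)) (k : ℕ) (h : k + 1 < p i) (v : V) :
    b.repr (F v) ⟨i, a, ⟨k + 1, h⟩⟩ = b.repr v ⟨i, a, ⟨k, by omega⟩⟩ := by
  have key : (b.coord ⟨i, a, ⟨k + 1, h⟩⟩) ∘ₗ F = b.coord ⟨i, a, ⟨k, by omega⟩⟩ := by
    apply b.ext
    rintro ⟨j, c, ⟨l, hl⟩⟩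
    simp only [LinearMap.comp_apply, hF]
    split_ifs with hc
    · simp only [Module.Basis.coord_apply, b.repr_self, Finsupp.single_apply]
      by_cases h2 : (⟨j, c, ⟨l, hl⟩⟩ : PyramidBox p r) = ⟨i, a, ⟨k, by omega⟩⟩
      · obtain ⟨rfl, rfl, hval⟩ := box_eq_iff.mp h2
        rw [if_pos h2, if_pos (box_eq_iff.mpr ⟨rfl, rfl, by simpa using hval⟩)]
      · rw [if_neg h2, if_neg]
        intro hcon
        obtain ⟨rfl, rfl, hval⟩ := box_eq_iff.mp hcon
        exact h2 (box_eq_iff.mpr ⟨rfl, rfl, by simpa using hval⟩)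
    · rw [map_zero, Module.Basis.coord_apply, b.repr_self, Finsupp.single_apply, if_neg]
      intro hcon
      obtain ⟨rfl, -, hval⟩ := box_eq_iff.mp hcon
      simp only at hval
      omega
  have := congrArg (fun (G : V →ₗ[K] K) => G v) key
  simpa using this

lemma repr_F
    (hF : ∀ x : PyramidBox p r, F (b x) = if h : (x.2.2 : ℕ) + 1 < p x.1
        then b ⟨x.1, x.2.1, ⟨(x.2.2 : ℕ) + 1, h⟩⟩ else 0)
    (i : Fin s) (a : Fin (r i)) (k : ℕ) (h : k < p i) (v : V) :
    b.repr (F v) ⟨i, a, ⟨k, h⟩⟩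
      = if h0 : 0 < k then b.repr v ⟨i, a, ⟨k - 1, by omega⟩⟩ else 0 := by
  rcases k with _ | k
  · rw [dif_neg (by omega)]; exact repr_F_zero b F hF i a h v
  · rw [dif_pos (by omega)]; exact repr_F_succ b F hF i a k h v

lemma comm_iff
    (hF : ∀ x : PyramidBox p r, F (b x) = if h : (x.2.2 : ℕ) + 1 < p x.1
        then b ⟨x.1, x.2.1, ⟨(x.2.2 : ℕ) + 1, h⟩⟩ else 0)
    (A : Module.End K V) :
    F ∘ₗ A = A ∘ₗ F ↔
      ∀ (y : PyramidBox p r) (i : Fin s) (a : Fin (r i)) (k : ℕ) (h : k < p i),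
        (if h0 : 0 < k then b.repr (A (b y)) ⟨i, a, ⟨k - 1, by omega⟩⟩ else 0)
          = if hy : (y.2.2 : ℕ) + 1 < p y.1
              then b.repr (A (b ⟨y.1, y.2.1, ⟨(y.2.2 : ℕ) + 1, hy⟩⟩)) ⟨i, a, ⟨k, h⟩⟩
              else 0 := by
  have main : ∀ (y : PyramidBox p r) (i : Fin s) (a : Fin (r i)) (k : ℕ) (h : k < p i),
      (b.repr ((F ∘ₗ A) (b y)) ⟨i, a, ⟨k, h⟩⟩
          = (if h0 : 0 < k then b.repr (A (b y)) ⟨i, a, ⟨k - 1, by omega⟩⟩ else 0))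
      ∧ (b.repr ((A ∘ₗ F) (b y)) ⟨i, a, ⟨k, h⟩⟩
          = if hy : (y.2.2 : ℕ) + 1 < p y.1
              then b.repr (A (b ⟨y.1, y.2.1, ⟨(y.2.2 : ℕ) + 1, hy⟩⟩)) ⟨i, a, ⟨k, h⟩⟩
              else 0) := by
    intro y i a k h
    constructor
    · rw [LinearMap.comp_apply, repr_F b F hF]
    · rw [LinearMap.comp_apply, hF y]
      split_ifs with hy
      · rfl
      · simp
  constructor
  · intro hc y i a k h
    rw [← (main y i a k h).1, ← (main y i a k h).2, hc]
  · intro hrel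
    apply b.ext; intro y
    apply b.ext_elem; rintro ⟨i, a, ⟨k, h⟩⟩
    rw [(main y i a k h).1, (main y i a k h).2]
    exact hrel y i a k h

end aux

section count

lemma fin_count (n M : ℕ) : (∑ k : Fin n, if M < (k : ℕ) then 1 else 0) = n - (M + 1) := by
  induction n with
  | zero => simp
  | succ n ih =>
    rw [Fin.sum_univ_castSucc]
    simp only [Fin.coe_castSucc, Fin.val_last, ih]
    split_ifs <;> omega

lemma sum_fin_ite (n N c : ℕ) (hn : 0 < n) :
    (∑ k : Fin n, if (k : ℕ) + 1 < n then N else c) = (n - 1) * N + c := by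
  obtain ⟨m, rfl⟩ : ∃ m, n = m + 1 := ⟨n - 1, by omega⟩
  rw [Fin.sum_univ_castSucc]
  simp only [Fin.coe_castSucc, Fin.val_last]
  rw [if_neg (by omega)]
  have : ∀ k : Fin m, (if (k : ℕ) + 1 < m + 1 then N else c) = N := by
    intro k; rw [if_pos (by omega)]
  rw [Finset.sum_congr rfl (fun k _ => this k)]
  simp [mul_comm]

lemma card_boxes {s : ℕ} (p r : Fin s → ℕ) :
    Fintype.card (PyramidBox p r) = ∑ i, r i * p i := by
  classical
  rw [Fintype.card_sigma]
  simp [Fintype.card_prod]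

lemma card_Q {s : ℕ} (p r : Fin s → ℕ) (hp : StrictAnti p) (hp0 : ∀ i, 0 < p i) :
    Fintype.card {z : PyramidBox p r × PyramidBox p r //
        ((z.1.2.2 : ℕ) + 1 < p z.1.1)
          ∨ ((z.1.2.2 : ℕ) + 1 = p z.1.1 ∧ (z.1.2.2 : ℕ) < (z.2.2.2 : ℕ))}
      = (∑ i, r i * p i) * ((∑ i, r i * p i) - ∑ i, r i)
        + ∑ i : Fin s, ∑ j : Fin s, (if i < j then r i * r j * (p i - p j) else 0) := by
  classical
  generalize hN : (∑ i, r i * p i) = N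
  -- the inner count for a fixed first box
  have inner : ∀ x : PyramidBox p r,
      (∑ y : PyramidBox p r, if ((x.2.2 : ℕ) + 1 < p x.1)
          ∨ ((x.2.2 : ℕ) + 1 = p x.1 ∧ (x.2.2 : ℕ) < (y.2.2 : ℕ)) then 1 else 0)
        = if (x.2.2 : ℕ) + 1 < p x.1 then N else ∑ j, r j * (p j - p x.1) := by
    intro x
    by_cases hx : (x.2.2 : ℕ) + 1 < p x.1
    · rw [if_pos hx]
      have : ∀ y : PyramidBox p r, (if ((x.2.2 : ℕ) + 1 < p x.1)
          ∨ ((x.2.2 : ℕ) + 1 = p x.1 ∧ (x.2.2 : ℕ) < (y.2.2 : ℕ)) then (1:ℕ) else 0) = 1 := by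
        intro y; rw [if_pos (Or.inl hx)]
      rw [Finset.sum_congr rfl (fun y _ => this y), Finset.sum_const, smul_eq_mul, mul_one,
        Finset.card_univ, card_boxes p r, hN]
    · rw [if_neg hx]
      have hx2 : (x.2.2 : ℕ) + 1 = p x.1 := by have := x.2.2.isLt; omega
      have step1 : ∀ y : PyramidBox p r, (if ((x.2.2 : ℕ) + 1 < p x.1)
          ∨ ((x.2.2 : ℕ) + 1 = p x.1 ∧ (x.2.2 : ℕ) < (y.2.2 : ℕ)) then (1:ℕ) else 0)
          = if (x.2.2 : ℕ) < (y.2.2 : ℕ) then 1 else 0 := by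
        intro y
        by_cases hy : (x.2.2 : ℕ) < (y.2.2 : ℕ)
        · rw [if_pos (Or.inr ⟨hx2, hy⟩), if_pos hy]
        · rw [if_neg (by tauto), if_neg hy]
      rw [Finset.sum_congr rfl (fun y _ => step1 y)]
      rw [← Finset.univ_sigma_univ, Finset.sum_sigma]
      refine Finset.sum_congr rfl (fun j _ => ?_)
      rw [Fintype.sum_prod_type]
      have : ∀ c : Fin (r j), (∑ l : Fin (p j),
          if (x.2.2 : ℕ) < (l : ℕ) then (1:ℕ) else 0) = p j - p x.1 := by
        intro c
        rw [fin_count, hx2]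
      rw [Finset.sum_congr rfl (fun c _ => this c)]
      simp [mul_comm]
  -- main computation
  rw [Fintype.card_subtype, Finset.card_filter, Fintype.sum_prod_type]
  rw [Finset.sum_congr rfl (fun x _ => inner x)]
  -- sum over x : sigma type
  rw [← Finset.univ_sigma_univ, Finset.sum_sigma]
  have outer : ∀ i : Fin s,
      (∑ q : Fin (r i) × Fin (p i),
        if ((q.2 : ℕ) + 1 < p i) then N else ∑ j, r j * (p j - p i))
      = r i * ((p i - 1) * N + ∑ j, r j * (p j - p i)) := by
    intro i
    rw [Fintype.sum_prod_type]
    have : ∀ a : Fin (r i), (∑ k : Fin (p i),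
        if ((k : ℕ) + 1 < p i) then N else ∑ j, r j * (p j - p i))
        = (p i - 1) * N + ∑ j, r j * (p j - p i) := fun a => sum_fin_ite _ _ _ (hp0 i)
    rw [Finset.sum_congr rfl (fun a _ => this a)]
    simp [mul_comm]
  rw [Finset.sum_congr rfl (fun i _ => outer i)]
  -- algebra
  have expand : ∀ i : Fin s, r i * ((p i - 1) * N + ∑ j, r j * (p j - p i))
      = r i * ((p i - 1) * N) + ∑ j, r i * (r j * (p j - p i)) := by
    intro i; rw [mul_add, Finset.mul_sum]
  rw [Finset.sum_congr rfl (fun i _ => expand i), Finset.sum_add_distrib]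
  have h1 : (∑ i, r i * ((p i - 1) * N)) = (∑ i, r i * (p i - 1)) * N := by
    rw [Finset.sum_mul]
    exact Finset.sum_congr rfl (fun i _ => by ring)
  have h2 : (∑ i, r i * (p i - 1)) + (∑ i, r i) = N := by
    rw [← hN, ← Finset.sum_add_distrib]
    refine Finset.sum_congr rfl (fun i _ => ?_)
    rw [← Nat.mul_add_one, Nat.sub_add_cancel (hp0 i)]
  have h3 : (∑ i, r i * (p i - 1)) = N - ∑ i, r i := by omega
  have h4 : (∑ i : Fin s, ∑ j : Fin s, r i * (r j * (p j - p i)))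
      = ∑ i : Fin s, ∑ j : Fin s, (if i < j then r i * r j * (p i - p j) else 0) := by
    rw [Finset.sum_comm]
    refine Finset.sum_congr rfl (fun i _ => Finset.sum_congr rfl (fun j _ => ?_))
    by_cases hij : i < j
    · rw [if_pos hij]; ring
    · rw [if_neg hij]
      have : p i ≤ p j := hp.antitone (by omega)
      have : p i - p j = 0 := by omega
      rw [this]
      ring
  rw [h1, h3, h4]
  ring

end count

/-- for `g = gl_N` with nilpotent `f` of partition type `p₁^{r₁} ⋯ p_s^{r_s}`
(`N = ∑ rᵢ pᵢ`, `r = ∑ rᵢ`), the subspace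
`U^⊥ = 1_{FᵗV}·End(V) ⊕ 1_{V₋}·(End V)[>0]` satisfies
`dim U^⊥ = N(N - r) + ∑_{i<j} rᵢ rⱼ (pᵢ - pⱼ)`, and `U^⊥` is a complement to the
centralizer `g^f = {A | AF = FA}` in `g`. -/
theorem stmt13 {K : Type*} [Field K] [CharZero K]
    {V : Type*} [AddCommGroup V] [Module K V]
    {s : ℕ} (p r : Fin s → ℕ) (hp : StrictAnti p) (hp0 : ∀ i, 0 < p i) (hr : ∀ i, 0 < r i)
    (b : Module.Basis (PyramidBox p r) K V)
    (F : Module.End K V)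
    (hF : ∀ x : PyramidBox p r,
      F (b x) = if h : (x.2.2 : ℕ) + 1 < p x.1
        then b ⟨x.1, x.2.1, ⟨(x.2.2 : ℕ) + 1, h⟩⟩ else 0) :
    Module.finrank K ↥(Uperp p r b)
        = (∑ i, r i * p i) * ((∑ i, r i * p i) - ∑ i, r i)
          + ∑ i : Fin s, ∑ j : Fin s, (if i < j then r i * r j * (p i - p j) else 0)
    ∧ IsCompl (LinearMap.ker (LinearMap.mulLeft K F - LinearMap.mulRight K F))
        (Uperp p r b) := by
  classical
  set T : Type _ := {z : PyramidBox p r × PyramidBox p r //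
      ((z.1.2.2 : ℕ) + 1 < p z.1.1)
        ∨ ((z.1.2.2 : ℕ) + 1 = p z.1.1 ∧ (z.1.2.2 : ℕ) < (z.2.2.2 : ℕ))} with hT
  have hUspan : Uperp p r b
      = Submodule.span K (Set.range ((basisEnd b) ∘ (Subtype.val : T → _))) := by
    unfold Uperp
    congr 1
    ext X
    constructor
    · rintro ⟨x, y, rfl, hcond⟩
      exact ⟨⟨(x, y), hcond⟩, basisEnd_apply b (x, y)⟩
    · rintro ⟨⟨⟨x, y⟩, hcond⟩, rfl⟩
      exact ⟨x, y, basisEnd_apply b (x, y), hcond⟩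
  have hQimage : Set.range ((basisEnd b) ∘ (Subtype.val : T → _))
      = basisEnd b '' {z : PyramidBox p r × PyramidBox p r |
          ((z.1.2.2 : ℕ) + 1 < p z.1.1)
            ∨ ((z.1.2.2 : ℕ) + 1 = p z.1.1 ∧ (z.1.2.2 : ℕ) < (z.2.2.2 : ℕ))} := by
    rw [Set.image_eq_range]
    rfl
  constructor
  · -- dimension count
    rw [hUspan,
      finrank_span_eq_card ((basisEnd b).linearIndependent.comp _ Subtype.val_injective)]
    exact card_Q p r hp hp0
  constructor
  · -- disjointness
    rw [Submodule.disjoint_def]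
    intro A hker hU
    have hcomm : F ∘ₗ A = A ∘ₗ F := by
      have h0 := LinearMap.mem_ker.mp hker
      rw [LinearMap.sub_apply, LinearMap.mulLeft_apply, LinearMap.mulRight_apply,
        sub_eq_zero] at h0
      exact h0
    have hrel := (comm_iff b F hF A).mp hcomm
    rw [hUspan, hQimage] at hU
    have hsupp := (Module.Basis.mem_span_image (basisEnd b)).mp hU
    have hzero : ∀ z : PyramidBox p r × PyramidBox p r,
        ¬(((z.1.2.2 : ℕ) + 1 < p z.1.1)
            ∨ ((z.1.2.2 : ℕ) + 1 = p z.1.1 ∧ (z.1.2.2 : ℕ) < (z.2.2.2 : ℕ)))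
          → b.repr (A (b z.2)) z.1 = 0 := by
      intro z hz
      rw [← basisEnd_repr]
      by_contra hne
      exact hz (hsupp (Finsupp.mem_support_iff.mpr hne))
    have claim1 : ∀ (kx : ℕ) (i : Fin s) (a : Fin (r i)) (h : kx < p i)
        (y : PyramidBox p r), kx < (y.2.2 : ℕ) → b.repr (A (b y)) ⟨i, a, ⟨kx, h⟩⟩ = 0 := by
      intro kx
      induction kx with
      | zero =>
        intro i a h y hy
        obtain ⟨j, c, m, hm⟩ := y
        have hy' : 0 < m := hy
        have hm1 : (m - 1) + 1 < p j := by omega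
        have hrel0 := hrel ⟨j, c, ⟨m - 1, by omega⟩⟩ i a 0 h
        rw [dif_neg (by omega), dif_pos hm1] at hrel0
        have hbox : (⟨j, c, ⟨(m - 1) + 1, hm1⟩⟩ : PyramidBox p r) = ⟨j, c, ⟨m, hm⟩⟩ :=
          box_eq_iff.mpr ⟨rfl, rfl, show (m - 1) + 1 = m by omega⟩
        rw [hbox] at hrel0
        exact hrel0.symm
      | succ n ih =>
        intro i a h y hy
        obtain ⟨j, c, m, hm⟩ := y
        have hy' : n + 1 < m := hy
        have hm1 : (m - 1) + 1 < p j := by omega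
        have hrel0 := hrel ⟨j, c, ⟨m - 1, by omega⟩⟩ i a (n + 1) h
        rw [dif_pos (Nat.succ_pos n), dif_pos hm1] at hrel0
        have hbox : (⟨j, c, ⟨(m - 1) + 1, hm1⟩⟩ : PyramidBox p r) = ⟨j, c, ⟨m, hm⟩⟩ :=
          box_eq_iff.mpr ⟨rfl, rfl, show (m - 1) + 1 = m by omega⟩
        rw [hbox] at hrel0
        rw [← hrel0]
        exact ih i a (by omega) ⟨j, c, ⟨m - 1, by omega⟩⟩ (show n < m - 1 by omega)
    have claim2 : ∀ (d : ℕ) (i : Fin s) (a : Fin (r i)) (kx : ℕ) (h : kx < p i),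
        p i - 1 - kx = d → ∀ y : PyramidBox p r, (y.2.2 : ℕ) ≤ kx →
          b.repr (A (b y)) ⟨i, a, ⟨kx, h⟩⟩ = 0 := by
      intro d
      induction d with
      | zero =>
        intro i a kx h hd y hy
        refine hzero (⟨i, a, ⟨kx, h⟩⟩, y) ?_
        rintro (h1 | ⟨h1, h2⟩)
        · have h1' : kx + 1 < p i := h1
          omega
        · have h2' : kx < (y.2.2 : ℕ) := h2
          omega
      | succ d ih =>
        intro i a kx h hd y hy
        have hkx1 : kx + 1 < p i := by omega
        obtain ⟨j, c, m, hm⟩ := y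
        have hy' : m ≤ kx := hy
        by_cases hyl : m + 1 < p j
        · have hrel0 := hrel ⟨j, c, ⟨m, hm⟩⟩ i a (kx + 1) hkx1
          rw [dif_pos (Nat.succ_pos kx), dif_pos hyl] at hrel0
          exact hrel0.trans
            (ih i a (kx + 1) hkx1 (by omega) ⟨j, c, ⟨m + 1, hyl⟩⟩ (show m + 1 ≤ kx + 1 by omega))
        · have hrel0 := hrel ⟨j, c, ⟨m, hm⟩⟩ i a (kx + 1) hkx1
          rw [dif_pos (Nat.succ_pos kx), dif_neg hyl] at hrel0
          exact hrel0
    have hall : ∀ (u y : PyramidBox p r), b.repr (A (b y)) u = 0 := by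
      rintro ⟨i, a, kx, h⟩ y
      by_cases hc : kx < (y.2.2 : ℕ)
      · exact claim1 kx i a h y hc
      · exact claim2 (p i - 1 - kx) i a kx h rfl y (by omega)
    apply b.ext
    intro y
    rw [LinearMap.zero_apply]
    exact b.ext_elem (fun u => by rw [hall u y, map_zero, Finsupp.coe_zero, Pi.zero_apply])
  · -- codisjointness
    rw [codisjoint_iff, eq_top_iff, ← (basisEnd b).span_eq, Submodule.span_le]
    rintro X ⟨⟨x, y⟩, rfl⟩
    by_cases hQ : ((x.2.2 : ℕ) + 1 < p x.1)
        ∨ ((x.2.2 : ℕ) + 1 = p x.1 ∧ (x.2.2 : ℕ) < (y.2.2 : ℕ))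
    · exact Submodule.mem_sup_right
        (Submodule.subset_span ⟨x, y, (basisEnd_apply b (x, y)), hQ⟩)
    · obtain ⟨i, a, kx, hkx⟩ := x
      obtain ⟨j, c, m, hm⟩ := y
      rw [not_or] at hQ
      obtain ⟨hQ1, hQ2⟩ := hQ
      have hQ1' : ¬(kx + 1 < p i) := hQ1
      have hx2 : kx + 1 = p i := by omega
      have hmy : m ≤ kx := by
        have hQ2' : ¬(kx + 1 = p i ∧ kx < m) := hQ2
        by_contra hcon
        exact hQ2' ⟨hx2, by omega⟩
      set C : Module.End K V := ∑ t ∈ Finset.range (m + 1),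
        elemEnd b (⟨i, a, ⟨kx - t, by omega⟩⟩ : PyramidBox p r)
          (⟨j, c, ⟨m - t, by omega⟩⟩ : PyramidBox p r) with hC
      set D : Module.End K V := ∑ t ∈ Finset.range m,
        elemEnd b (⟨i, a, ⟨kx - (t + 1), by omega⟩⟩ : PyramidBox p r)
          (⟨j, c, ⟨m - (t + 1), by omega⟩⟩ : PyramidBox p r) with hD
      have hsplit : C = D + elemEnd b ⟨i, a, ⟨kx, hkx⟩⟩ ⟨j, c, ⟨m, hm⟩⟩ := by
        rw [hC, Finset.sum_range_succ']
        rfl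
      have hcC : ∀ u w : PyramidBox p r, b.repr (C (b w)) u
          = if (∃ t, t ≤ m ∧ w = (⟨j, c, ⟨m - t, by omega⟩⟩ : PyramidBox p r)
              ∧ u = (⟨i, a, ⟨kx - t, by omega⟩⟩ : PyramidBox p r)) then 1 else 0 := by
        intro u w
        rw [hC, LinearMap.sum_apply, map_sum, Finsupp.coe_finset_sum, Finset.sum_apply]
        have hterm : ∀ t, b.repr (elemEnd b
            (⟨i, a, ⟨kx - t, by omega⟩⟩ : PyramidBox p r)
            (⟨j, c, ⟨m - t, by omega⟩⟩ : PyramidBox p r) (b w)) u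
          = if w = (⟨j, c, ⟨m - t, by omega⟩⟩ : PyramidBox p r)
              ∧ (⟨i, a, ⟨kx - t, by omega⟩⟩ : PyramidBox p r) = u then 1 else 0 :=
          fun t => repr_elemEnd b _ _ w u
        rw [Finset.sum_congr rfl (fun t _ => hterm t)]
        by_cases hex : ∃ t, t ≤ m ∧ w = (⟨j, c, ⟨m - t, by omega⟩⟩ : PyramidBox p r)
            ∧ u = (⟨i, a, ⟨kx - t, by omega⟩⟩ : PyramidBox p r)
        · rw [if_pos hex]
          obtain ⟨t₀, ht₀, hw, hu⟩ := hex
          rw [Finset.sum_eq_single t₀]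
          · rw [if_pos ⟨hw, hu.symm⟩]
          · intro t ht hne
            rw [if_neg]
            rintro ⟨hw2, -⟩
            rw [hw] at hw2
            obtain ⟨-, -, hval⟩ := box_eq_iff.mp hw2
            have hval' : m - t₀ = m - t := hval
            simp only [Finset.mem_range] at ht
            omega
          · intro hmem
            exact absurd (Finset.mem_range.mpr (by omega)) hmem
        · rw [if_neg hex, Finset.sum_eq_zero]
          intro t ht
          rw [if_neg]
          rintro ⟨hw, hu⟩
          simp only [Finset.mem_range] at ht
          exact hex ⟨t, by omega, hw, hu.symm⟩
      have hCker : C ∈ LinearMap.ker (LinearMap.mulLeft K F - LinearMap.mulRight K F) := by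
        rw [LinearMap.mem_ker, LinearMap.sub_apply, LinearMap.mulLeft_apply,
          LinearMap.mulRight_apply, sub_eq_zero]
        apply (comm_iff b F hF C).mpr
        intro w i' a' k h
        obtain ⟨j', c', mw, hmw⟩ := w
        by_cases h0 : 0 < k
        · rw [dif_pos h0]
          by_cases hyl : (mw : ℕ) + 1 < p j'
          · rw [dif_pos hyl, hcC, hcC]
            refine if_congr ?_ rfl rfl
            constructor
            · rintro ⟨t, ht, hw, hu⟩
              obtain ⟨hj2, hc2, hval1⟩ := box_eq_iff.mp hw
              obtain ⟨hi2, ha2, hval2⟩ := box_eq_iff.mp hu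
              have hv1 : mw = m - t := hval1
              have hv2 : k - 1 = kx - t := hval2
              have hyl' : mw + 1 < p j := by rw [← congrArg p hj2]; exact hyl
              have h' : k < p i := by rw [← congrArg p hi2]; exact h
              refine ⟨t - 1, by omega, box_eq_iff.mpr ⟨hj2, hc2,
                show mw + 1 = m - (t - 1) by omega⟩,
                box_eq_iff.mpr ⟨hi2, ha2, show k = kx - (t - 1) by omega⟩⟩
            · rintro ⟨t, ht, hw, hu⟩
              obtain ⟨hj2, hc2, hval1⟩ := box_eq_iff.mp hw
              obtain ⟨hi2, ha2, hval2⟩ := box_eq_iff.mp hu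
              have hv1 : mw + 1 = m - t := hval1
              have hv2 : k = kx - t := hval2
              refine ⟨t + 1, by omega, box_eq_iff.mpr ⟨hj2, hc2,
                show mw = m - (t + 1) by omega⟩,
                box_eq_iff.mpr ⟨hi2, ha2, show k - 1 = kx - (t + 1) by omega⟩⟩
          · rw [dif_neg hyl, hcC, if_neg]
            rintro ⟨t, ht, hw, hu⟩
            obtain ⟨hj2, hc2, hval1⟩ := box_eq_iff.mp hw
            obtain ⟨hi2, ha2, hval2⟩ := box_eq_iff.mp hu
            have hv1 : mw = m - t := hval1
            have hv2 : k - 1 = kx - t := hval2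
            have hyl' : ¬(mw + 1 < p j) := by rw [← congrArg p hj2]; exact hyl
            have h' : k < p i := by rw [← congrArg p hi2]; exact h
            omega
        · rw [dif_neg h0]
          by_cases hyl : (mw : ℕ) + 1 < p j'
          · rw [dif_pos hyl, hcC, if_neg]
            rintro ⟨t, ht, hw, hu⟩
            obtain ⟨hj2, hc2, hval1⟩ := box_eq_iff.mp hw
            obtain ⟨hi2, ha2, hval2⟩ := box_eq_iff.mp hu
            have hv1 : mw + 1 = m - t := hval1
            have hv2 : k = kx - t := hval2
            omega
          · rw [dif_neg hyl]
      have hDU : D ∈ Uperp p r b := by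
        rw [hD]
        apply Submodule.sum_mem
        intro t ht
        simp only [Finset.mem_range] at ht
        apply Submodule.subset_span
        exact ⟨_, _, rfl, Or.inl (show kx - (t + 1) + 1 < p i by omega)⟩
      have hEeq : basisEnd b (⟨⟨i, a, ⟨kx, hkx⟩⟩, ⟨j, c, ⟨m, hm⟩⟩⟩ :
          PyramidBox p r × PyramidBox p r) = C - D := by
        rw [basisEnd_apply, hsplit]
        abel
      rw [hEeq]
      exact Submodule.sub_mem _ (Submodule.mem_sup_left hCker) (Submodule.mem_sup_right hDU)
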